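/- Let P be a symmetric idempotent real n×n matrix with P ≠ I, M a symmetric positive definite real n×n matrix, μ > 0, and M̄ = P M P + μ (I − P). Then the spectrum (set of real eigenvalues) of M̄ equals {μ} ∪ (spectrum of P M P \ {0}). -/

import Mathlib

open Matrix

lemma mem_spec_iff {n : ℕ} (B : Matrix (Fin n) (Fin n) ℝ) (r : ℝ) :
    r ∈ spectrum ℝ B ↔ ∃ v, v ≠ 0 ∧ B *ᵥ v = r • v := by
  rw [spectrum.mem_iff, Matrix.isUnit_iff_isUnit_det, isUnit_iff_ne_zero, not_ne_iff,
    ← Matrix.exists_mulVec_eq_zero_iff]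
  have key : ∀ v, (algebraMap ℝ (Matrix (Fin n) (Fin n) ℝ) r - B) *ᵥ v
      = r • v - B *ᵥ v := fun v => by
    rw [Matrix.sub_mulVec, Algebra.algebraMap_eq_smul_one, Matrix.smul_mulVec,
      Matrix.one_mulVec]
  simp only [key, sub_eq_zero]
  exact exists_congr fun v => and_congr_right fun _ => eq_comm

/-- The spectrum of the constraint inertia matrix `M̄ = PMP + μ(I - P)` (with `P ≠ I`)
is the union of `{μ}` and the nonzero part of the spectrum of `PMP`. -/
theorem stmt_5 (n : ℕ)
    (P M : Matrix (Fin n) (Fin n) ℝ)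
    (hPsymm : Pᵀ = P) (hPidem : P * P = P) (hPne : P ≠ 1)
    (hM : M.PosDef) (μ : ℝ) (hμ : 0 < μ) :
    spectrum ℝ (P * M * P + μ • ((1 : Matrix (Fin n) (Fin n) ℝ) - P)) =
      {μ} ∪ (spectrum ℝ (P * M * P) \ {0}) := by
  set A : Matrix (Fin n) (Fin n) ℝ := P * M * P with hA
  set Q : Matrix (Fin n) (Fin n) ℝ := 1 - P with hQ
  have hPA : P * A = A := by rw [hA, ← mul_assoc, ← mul_assoc, hPidem]
  have hAP : A * P = A := by rw [hA, mul_assoc, mul_assoc, hPidem, ← mul_assoc]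
  have hAQ : A * Q = 0 := by rw [hQ, mul_sub, mul_one, hAP, sub_self]
  have hQA : Q * A = 0 := by rw [hQ, sub_mul, one_mul, hPA, sub_self]
  have hPQ : P * Q = 0 := by rw [hQ, mul_sub, mul_one, hPidem, sub_self]
  have hQQ : Q * Q = Q := by
    rw [hQ, sub_mul, one_mul, mul_sub, mul_one, hPidem]; simp
  -- positivity: if P *ᵥ v = v and v ≠ 0 then A *ᵥ v ≠ 0
  have hpos : ∀ v : Fin n → ℝ, v ≠ 0 → P *ᵥ v = v → A *ᵥ v ≠ 0 := by
    intro v hv hPv hAv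
    have h1 : v ⬝ᵥ (A *ᵥ v) = 0 := by rw [hAv, dotProduct_zero]
    have h2 : v ⬝ᵥ (A *ᵥ v) = v ⬝ᵥ (M *ᵥ v) := by
      rw [hA, ← Matrix.mulVec_mulVec, ← Matrix.mulVec_mulVec, hPv,
        Matrix.dotProduct_mulVec v P, ← Matrix.mulVec_transpose, hPsymm, hPv,
        Matrix.dotProduct_mulVec]
    have h3 : 0 < v ⬝ᵥ (M *ᵥ v) := by
      have := hM.dotProduct_mulVec_pos hv
      simpa using this
    rw [h1] at h2; linarith
  ext lam
  simp only [Set.mem_union, Set.mem_singleton_iff, Set.mem_diff, mem_spec_iff]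
  constructor
  · rintro ⟨v, hv, hev⟩
    -- hev : (A + μ • Q) *ᵥ v = lam • v
    have hev' : A *ᵥ v + μ • (Q *ᵥ v) = lam • v := by
      rw [← hev, Matrix.add_mulVec, Matrix.smul_mulVec]
    set w : Fin n → ℝ := Q *ᵥ v with hw
    set u : Fin n → ℝ := P *ᵥ v with hu
    have hvuw : v = u + w := by
      rw [hu, hw, ← Matrix.add_mulVec]
      have : P + Q = 1 := by rw [hQ, add_sub_cancel]
      rw [this, Matrix.one_mulVec]
    have hQw : Q *ᵥ w = w := by rw [hw, Matrix.mulVec_mulVec, hQQ]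
    have hPw : P *ᵥ w = 0 := by rw [hw, Matrix.mulVec_mulVec, hPQ, Matrix.zero_mulVec]
    have hQev : μ • w = lam • w := by
      have := congrArg (fun x => Q *ᵥ x) hev'
      simpa [Matrix.mulVec_add, Matrix.mulVec_smul, Matrix.mulVec_mulVec, hQA, hQw,
        Matrix.zero_mulVec, ← hw] using this
    -- apply P to hev'
    have hPev : A *ᵥ v = lam • u := by
      have := congrArg (fun x => P *ᵥ x) hev'
      simpa [Matrix.mulVec_add, Matrix.mulVec_smul, Matrix.mulVec_mulVec, hPA, hPw,
        Matrix.zero_mulVec, ← hu] using this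
    by_cases hwz : w = 0
    · right
      have hvu : v = u := by rw [hvuw, hwz, add_zero]
      have hAv : A *ᵥ v = lam • v := by rw [hPev, hvu]
      refine ⟨⟨v, hv, hAv⟩, ?_⟩
      intro h0
      subst h0
      exact hpos v hv (by rw [← hu, ← hvu]) (by rw [hAv, zero_smul])
    · left
      have : (μ - lam) • w = 0 := by rw [sub_smul, hQev, sub_self]
      rcases smul_eq_zero.mp this with h | h
      · linarith [sub_eq_zero.mp (by linarith [h] : μ - lam = 0)]
      · exact absurd h hwz
  · rintro (rfl | ⟨hlam, h0⟩)
    · -- μ is an eigenvalue: take w = Q *ᵥ v ≠ 0 for some v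
      have hQne : Q ≠ 0 := by
        rw [hQ, sub_ne_zero]; exact fun h => hPne h.symm
      have : ∃ v, Q *ᵥ v ≠ 0 := by
        by_contra h
        push_neg at h
        apply hQne
        ext i j
        have := congrFun (h (Pi.single j 1)) i
        simpa [Matrix.mulVec_single] using this
      obtain ⟨v, hv⟩ := this
      refine ⟨Q *ᵥ v, hv, ?_⟩
      rw [Matrix.add_mulVec, Matrix.smul_mulVec, Matrix.mulVec_mulVec, hAQ,
        Matrix.zero_mulVec, zero_add, Matrix.mulVec_mulVec, hQQ]
    · obtain ⟨v, hv, hAv⟩ := hlam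
      have hlam0 : lam ≠ 0 := by simpa using h0
      have hPv : P *ᵥ v = v := by
        have h1 : lam • (P *ᵥ v) = lam • v := by
          rw [← Matrix.mulVec_smul, ← hAv, Matrix.mulVec_mulVec, hPA, hAv]
        exact smul_right_injective _ hlam0 h1
      have hQv : Q *ᵥ v = 0 := by
        rw [hQ, Matrix.sub_mulVec, Matrix.one_mulVec, hPv, sub_self]
      refine ⟨v, hv, ?_⟩
      rw [Matrix.add_mulVec, Matrix.smul_mulVec, hQv, smul_zero, add_zero, hAv]
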